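/- For the scalar BPSK Gaussian channel, the MMSE admits the low-SNR expansion mmse(snr) = 1 − snr + O(snr²) as snr → 0⁺. -/

import Mathlib

open Real MeasureTheory

private lemma tanh_sq_le_one' (x : ℝ) : Real.tanh x ^ 2 ≤ 1 := by
  rw [Real.tanh_eq_sinh_div_cosh, div_pow, div_le_one (pow_pos (Real.cosh_pos x) 2)]
  nlinarith [Real.cosh_sq x]

private lemma hasDerivAt_tanh' (x : ℝ) :
    HasDerivAt Real.tanh (1 - Real.tanh x ^ 2) x := by
  have hc : Real.cosh x ≠ 0 := (Real.cosh_pos x).ne'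
  have h := (Real.hasDerivAt_sinh x).div (Real.hasDerivAt_cosh x) hc
  have hfun : Real.tanh = fun y => Real.sinh y / Real.cosh y :=
    funext fun y => Real.tanh_eq_sinh_div_cosh y
  rw [hfun]
  simp only
  refine h.congr_deriv ?_
  rw [div_pow, one_sub_div (pow_ne_zero 2 hc)]
  congr 1
  linarith [Real.cosh_sq_sub_sinh_sq x]

private lemma hasDerivAt_sub_tanh (x : ℝ) :
    HasDerivAt (fun y => y - Real.tanh y) (Real.tanh x ^ 2) x := by
  exact ((hasDerivAt_id' x).sub (hasDerivAt_tanh' x)).congr_deriv (by ring)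

private lemma abs_tanh_le' (x : ℝ) : |Real.tanh x| ≤ |x| := by
  have h := convex_univ.norm_image_sub_le_of_norm_hasDerivWithin_le
    (f := Real.tanh) (f' := fun y => 1 - Real.tanh y ^ 2)
    (fun y _ => (hasDerivAt_tanh' y).hasDerivWithinAt) (C := 1)
    (fun y _ => by
      rw [Real.norm_eq_abs, abs_le]
      constructor <;> nlinarith [tanh_sq_le_one' y, sq_nonneg (Real.tanh y)])
    (Set.mem_univ 0) (Set.mem_univ x)
  simpa [Real.tanh_zero] using h

private lemma rdiff_le' (a h : ℝ) :
    |(a + h - Real.tanh (a + h)) - (a - Real.tanh a)| ≤ (|a| + |h|) ^ 2 * |h| := by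
  set B := |a| + |h| with hB
  have hmem1 : a ∈ Set.Icc (-B) B := by
    constructor
    · nlinarith [neg_abs_le a, abs_nonneg h]
    · nlinarith [le_abs_self a, abs_nonneg h]
  have hmem2 : a + h ∈ Set.Icc (-B) B := by
    have := abs_add_le a h
    constructor
    · nlinarith [neg_abs_le (a + h)]
    · nlinarith [le_abs_self (a + h)]
  have key := (convex_Icc (-B) B).norm_image_sub_le_of_norm_hasDerivWithin_le
    (f := fun y => y - Real.tanh y) (f' := fun y => Real.tanh y ^ 2)
    (fun y _ => (hasDerivAt_sub_tanh y).hasDerivWithinAt) (C := B ^ 2)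
    (fun y hy => by
      rw [Real.norm_eq_abs, abs_of_nonneg (sq_nonneg _)]
      have h1 := abs_tanh_le' y
      have h2 : |y| ≤ B := abs_le.mpr ⟨hy.1, hy.2⟩
      calc Real.tanh y ^ 2 = |Real.tanh y| ^ 2 := (sq_abs _).symm
        _ ≤ |y| ^ 2 := pow_le_pow_left₀ (abs_nonneg _) h1 2
        _ ≤ B ^ 2 := pow_le_pow_left₀ (abs_nonneg _) h2 2)
    hmem1 hmem2
  simpa [Real.norm_eq_abs, add_sub_cancel_left] using key

private lemma integrable_e : Integrable (fun z : ℝ => Real.exp (-z ^ 2 / 2)) := by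
  have h := integrable_exp_neg_mul_sq (b := (1 : ℝ) / 2) (by norm_num)
  have : (fun z : ℝ => Real.exp (-z ^ 2 / 2)) = fun z => Real.exp (-((1 : ℝ) / 2) * z ^ 2) := by
    funext z; congr 1; ring
  rw [this]; exact h

private lemma integrable_ze : Integrable (fun z : ℝ => z * Real.exp (-z ^ 2 / 2)) := by
  have h := integrable_mul_exp_neg_mul_sq (b := (1 : ℝ) / 2) (by norm_num)
  have : (fun z : ℝ => z * Real.exp (-z ^ 2 / 2))
      = fun z => z * Real.exp (-((1 : ℝ) / 2) * z ^ 2) := by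
    funext z; congr 1; congr 1; ring
  rw [this]; exact h

private lemma integrable_z2e : Integrable (fun z : ℝ => z ^ 2 * Real.exp (-z ^ 2 / 2)) := by
  have h := integrable_rpow_mul_exp_neg_mul_sq (b := (1 : ℝ) / 2) (by norm_num)
    (s := 2) (by norm_num)
  have : (fun z : ℝ => z ^ 2 * Real.exp (-z ^ 2 / 2))
      = fun z : ℝ => z ^ (2 : ℝ) * Real.exp (-((1 : ℝ) / 2) * z ^ 2) := by
    funext z
    rw [show ((2 : ℝ)) = ((2 : ℕ) : ℝ) by norm_num, Real.rpow_natCast]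
    congr 2
    ring
  rw [this]; exact h

private lemma integrable_abse : Integrable (fun z : ℝ => |z| * Real.exp (-z ^ 2 / 2)) := by
  have h := integrable_ze.abs
  have : (fun z : ℝ => |z * Real.exp (-z ^ 2 / 2)|)
      = fun z => |z| * Real.exp (-z ^ 2 / 2) := by
    funext z; rw [abs_mul, abs_of_pos (Real.exp_pos _)]
  rwa [this] at h

private lemma integrable_dom : Integrable (fun z : ℝ => (|z| + 1) ^ 2 * Real.exp (-z ^ 2 / 2)) := by
  have heq : (fun z : ℝ => (|z| + 1) ^ 2 * Real.exp (-z ^ 2 / 2))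
      = fun z => z ^ 2 * Real.exp (-z ^ 2 / 2)
        + (2 * (|z| * Real.exp (-z ^ 2 / 2)) + Real.exp (-z ^ 2 / 2)) := by
    funext z
    have hz : |z| ^ 2 = z ^ 2 := sq_abs z
    nlinarith [Real.exp_pos (-z ^ 2 / 2)]
  rw [heq]
  exact integrable_z2e.add ((integrable_abse.const_mul 2).add integrable_e)

private lemma integrable_tanh_mul (c d : ℝ) :
    Integrable (fun z : ℝ => Real.tanh (c * z + d) * Real.exp (-z ^ 2 / 2)) := by
  have htanh : Continuous Real.tanh :=
    continuous_iff_continuousAt.mpr fun y => (hasDerivAt_tanh' y).differentiableAt.continuousAt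
  refine integrable_e.mono' ?_ ?_
  · exact ((htanh.comp (by continuity)).mul
      (Real.continuous_exp.comp (by continuity))).aestronglyMeasurable
  · filter_upwards with z
    rw [Real.norm_eq_abs, abs_mul, abs_of_pos (Real.exp_pos _)]
    have h1 : |Real.tanh (c * z + d)| ≤ 1 := by
      nlinarith [tanh_sq_le_one' (c * z + d), sq_abs (Real.tanh (c * z + d)),
        abs_nonneg (Real.tanh (c * z + d))]
    nlinarith [Real.exp_pos (-z ^ 2 / 2)]

private lemma integral_e : (∫ z : ℝ, Real.exp (-z ^ 2 / 2)) = Real.sqrt (2 * π) := by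
  have h : ∀ z : ℝ, -z ^ 2 / 2 = -((1 : ℝ) / 2) * z ^ 2 := fun z => by ring
  simp_rw [h]
  rw [integral_gaussian]
  congr 1
  ring

private lemma integral_ze : (∫ z : ℝ, z * Real.exp (-z ^ 2 / 2)) = 0 := by
  set f : ℝ → ℝ := fun z => z * Real.exp (-z ^ 2 / 2) with hf
  have h1 : (∫ z : ℝ, f (-z)) = ∫ z : ℝ, f z := integral_neg_eq_self f volume
  have h2 : (fun z : ℝ => f (-z)) = fun z => -f z := by
    funext z
    simp only [hf]
    rw [show (-z) ^ 2 = z ^ 2 by ring]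
    ring
  rw [h2, integral_neg] at h1
  linarith

private lemma integral_odd (t : ℝ) :
    (∫ z : ℝ, (t * z - Real.tanh (t * z)) * Real.exp (-z ^ 2 / 2)) = 0 := by
  set f : ℝ → ℝ := fun z => (t * z - Real.tanh (t * z)) * Real.exp (-z ^ 2 / 2) with hf
  have h1 : (∫ z : ℝ, f (-z)) = ∫ z : ℝ, f z := integral_neg_eq_self f volume
  have h2 : (fun z : ℝ => f (-z)) = fun z => -f z := by
    funext z
    simp only [hf]
    rw [show (-z) ^ 2 = z ^ 2 by ring, show t * -z = -(t * z) by ring, Real.tanh_neg]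
    ring
  rw [h2, integral_neg] at h1
  linarith

private lemma key_est (t : ℝ) (ht0 : 0 < t) (ht1 : t ≤ 1) :
    |(∫ y : ℝ, Real.tanh (t * y) * Real.exp (-(y - t) ^ 2 / 2))
      - Real.sqrt (2 * π) * t ^ 2|
      ≤ (∫ z : ℝ, (|z| + 1) ^ 2 * Real.exp (-z ^ 2 / 2)) * t ^ 4 := by
  -- change of variables
  have hcv : (∫ y : ℝ, Real.tanh (t * y) * Real.exp (-(y - t) ^ 2 / 2))
      = ∫ z : ℝ, Real.tanh (t * z + t ^ 2) * Real.exp (-z ^ 2 / 2) := by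
    rw [← integral_add_right_eq_self (μ := volume)
      (fun y => Real.tanh (t * y) * Real.exp (-(y - t) ^ 2 / 2)) t]
    congr 1
    funext z
    rw [show z + t - t = z by ring, show t * (z + t) = t * z + t ^ 2 by ring]
  -- pieces
  set e : ℝ → ℝ := fun z => Real.exp (-z ^ 2 / 2) with he
  set f1 : ℝ → ℝ := fun z => t ^ 2 * e z + t * (z * e z) with hf1
  set fodd : ℝ → ℝ := fun z => (t * z - Real.tanh (t * z)) * e z with hfodd
  set fD : ℝ → ℝ := fun z => f1 z - fodd z - Real.tanh (t * z + t ^ 2) * e z with hfD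
  have hint_f1 : Integrable f1 := (integrable_e.const_mul (t ^ 2)).add (integrable_ze.const_mul t)
  have hint_tanh : Integrable (fun z => Real.tanh (t * z + t ^ 2) * e z) :=
    integrable_tanh_mul t (t ^ 2)
  have hint_tanh0 : Integrable (fun z => Real.tanh (t * z + 0) * e z) :=
    integrable_tanh_mul t 0
  have hint_fodd : Integrable fodd := by
    have h1 : fodd = fun z => t * (z * e z) - Real.tanh (t * z + 0) * e z := by
      funext z; simp only [hfodd, add_zero]; ring
    rw [h1]
    exact (integrable_ze.const_mul t).sub hint_tanh0
  have hint_fD : Integrable fD := (hint_f1.sub hint_fodd).sub hint_tanh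
  -- the decomposition
  have hsplit : (∫ z : ℝ, Real.tanh (t * z + t ^ 2) * e z)
      = (∫ z : ℝ, f1 z) - (∫ z : ℝ, fodd z) - (∫ z : ℝ, fD z) := by
    have h12 : Integrable (fun z => f1 z - fodd z) := hint_f1.sub hint_fodd
    rw [← integral_sub hint_f1 hint_fodd, ← integral_sub h12 hint_fD]
    congr 1
    funext z
    simp only [hfD]
    ring
  have hI1 : (∫ z : ℝ, f1 z) = Real.sqrt (2 * π) * t ^ 2 := by
    simp only [hf1]
    rw [integral_add (integrable_e.const_mul (t ^ 2)) (integrable_ze.const_mul t),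
      integral_const_mul, integral_const_mul, integral_e, integral_ze]
    ring
  have hIodd : (∫ z : ℝ, fodd z) = 0 := integral_odd t
  -- bound on fD
  have hbound : ∀ z : ℝ, ‖fD z‖ ≤ t ^ 4 * ((|z| + 1) ^ 2 * e z) := by
    intro z
    have hfDz : fD z = ((t * z + t ^ 2 - Real.tanh (t * z + t ^ 2))
        - (t * z - Real.tanh (t * z))) * e z := by
      simp only [hfD, hf1, hfodd]; ring
    have hepos : 0 < e z := Real.exp_pos _
    rw [Real.norm_eq_abs, hfDz, abs_mul, abs_of_pos hepos]
    have h1 := rdiff_le' (t * z) (t ^ 2)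
    have h2 : |t ^ 2| = t ^ 2 := abs_of_pos (by positivity)
    have h3 : |t * z| = t * |z| := by rw [abs_mul, abs_of_pos ht0]
    have h4 : (|t * z| + |t ^ 2|) ^ 2 * |t ^ 2| ≤ t ^ 4 * (|z| + 1) ^ 2 := by
      rw [h2, h3]
      have h5 : t * |z| + t ^ 2 ≤ t * (|z| + 1) := by nlinarith [abs_nonneg z]
      have h6 : (t * |z| + t ^ 2) ^ 2 ≤ (t * (|z| + 1)) ^ 2 := by
        apply pow_le_pow_left₀ (by positivity) h5
      calc (t * |z| + t ^ 2) ^ 2 * t ^ 2 ≤ (t * (|z| + 1)) ^ 2 * t ^ 2 := by nlinarith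
        _ = t ^ 4 * (|z| + 1) ^ 2 := by ring
    calc |t * z + t ^ 2 - Real.tanh (t * z + t ^ 2) - (t * z - Real.tanh (t * z))| * e z
        ≤ ((|t * z| + |t ^ 2|) ^ 2 * |t ^ 2|) * e z := by
          apply mul_le_mul_of_nonneg_right h1 hepos.le
      _ ≤ (t ^ 4 * (|z| + 1) ^ 2) * e z := mul_le_mul_of_nonneg_right h4 hepos.le
      _ = t ^ 4 * ((|z| + 1) ^ 2 * e z) := by ring
  have hdom' : Integrable (fun z : ℝ => t ^ 4 * ((|z| + 1) ^ 2 * e z)) :=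
    integrable_dom.const_mul _
  have hDle : ‖∫ z : ℝ, fD z‖ ≤ ∫ z : ℝ, t ^ 4 * ((|z| + 1) ^ 2 * e z) :=
    norm_integral_le_of_norm_le hdom' (Filter.Eventually.of_forall hbound)
  rw [hcv, hsplit, hI1, hIodd]
  rw [integral_const_mul] at hDle
  have habs : |(Real.sqrt (2 * π) * t ^ 2 - 0 - ∫ z : ℝ, fD z) - Real.sqrt (2 * π) * t ^ 2|
      = ‖∫ z : ℝ, fD z‖ := by
    rw [Real.norm_eq_abs, ← abs_neg]
    congr 1
    ring
  rw [habs]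
  calc ‖∫ z : ℝ, fD z‖ ≤ t ^ 4 * ∫ z : ℝ, (|z| + 1) ^ 2 * e z := hDle
    _ = (∫ z : ℝ, (|z| + 1) ^ 2 * Real.exp (-z ^ 2 / 2)) * t ^ 4 := by
      simp only [he]
      ring

/-- Low-SNR expansion of the BPSK MMSE: `mmse(snr) = 1 − snr + O(snr²)` as `snr → 0⁺`,
where `mmse(snr) = 1 − (1/√(2π)) ∫ tanh(√snr·y) e^{−(y−√snr)²/2} dy`. -/
theorem bpsk_mmse_low_snr :
    ∃ C > (0 : ℝ), ∃ δ > (0 : ℝ), ∀ snr : ℝ, 0 < snr → snr < δ →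
      |(1 - (1 / Real.sqrt (2 * π)) *
          ∫ y : ℝ, Real.tanh (Real.sqrt snr * y) * Real.exp (-(y - Real.sqrt snr) ^ 2 / 2))
        - (1 - snr)| ≤ C * snr ^ 2 := by
  set M := ∫ z : ℝ, (|z| + 1) ^ 2 * Real.exp (-z ^ 2 / 2) with hM
  have hM0 : 0 ≤ M := integral_nonneg fun z => by positivity
  refine ⟨M + 1, by linarith, 1, one_pos, fun snr h0 h1 => ?_⟩
  set t := Real.sqrt snr with ht
  have ht0 : 0 < t := Real.sqrt_pos.mpr h0
  have ht1 : t ≤ 1 := Real.sqrt_le_one.mpr h1.le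
  have ht2 : t ^ 2 = snr := Real.sq_sqrt h0.le
  have ht4 : t ^ 4 = snr ^ 2 := by rw [show t ^ 4 = (t ^ 2) ^ 2 by ring, ht2]
  have key := key_est t ht0 ht1
  rw [ht2, ht4] at key
  have hs : (1 : ℝ) ≤ Real.sqrt (2 * π) := by
    rw [show (1 : ℝ) = Real.sqrt 1 by simp]
    exact Real.sqrt_le_sqrt (by nlinarith [Real.pi_gt_three])
  have hspos : 0 < Real.sqrt (2 * π) := lt_of_lt_of_le one_pos hs
  set I := ∫ y : ℝ, Real.tanh (t * y) * Real.exp (-(y - t) ^ 2 / 2) with hI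
  have hc1 : 1 / Real.sqrt (2 * π) ≤ 1 := by
    rw [div_le_one hspos]
    exact hs
  have heq : (1 - 1 / Real.sqrt (2 * π) * I) - (1 - snr)
      = 1 / Real.sqrt (2 * π) * (Real.sqrt (2 * π) * snr - I) := by
    field_simp
    ring
  calc |(1 - 1 / Real.sqrt (2 * π) * I) - (1 - snr)|
      = 1 / Real.sqrt (2 * π) * |Real.sqrt (2 * π) * snr - I| := by
        rw [heq, abs_mul, abs_of_pos (by positivity)]
    _ ≤ 1 * (M * snr ^ 2) := by
        refine mul_le_mul hc1 ?_ (abs_nonneg _) one_pos.le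
        rw [abs_sub_comm]
        exact key
    _ ≤ (M + 1) * snr ^ 2 := by nlinarith [sq_nonneg snr]
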